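/- arXiv:2602.20087 — 5 statements merged into one kernel-verified Lean document; each statement's English description precedes it below -/
import Mathlib

section
/- Let v : [0,1] × [a,b] → ℝ be C¹ with v(x,t) strictly increasing in x, v(0,t) = 0, and v_x(x,t) > 0. If log v_x(x,t) is supermodular in (x,t) (i.e., v_x(x₂,t)/v_x(x₁,t) is nondecreasing in t for all x₁ < x₂), then v(x₂,t)/v(x₁,t) is nondecreasing in t for all 0 < x₁ < x₂ ≤ 1. -/
open Set MeasureTheory

/-- If `v(x,t) = ∫₀ˣ g(s,t) ds` with `g > 0` log-supermodular in `(x,t)`, then the ratio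
`v(x₂,t)/v(x₁,t)` is nondecreasing in `t` for all `0 < x₁ < x₂ ≤ 1`. -/
theorem stmt_4 (a b : ℝ) (hab : a < b) (g v : ℝ → ℝ → ℝ)
    (hgpos : ∀ s ∈ Icc (0:ℝ) 1, ∀ t ∈ Icc a b, 0 < g s t)
    (hint : ∀ t ∈ Icc a b, IntervalIntegrable (fun s => g s t) volume 0 1)
    (hv : ∀ x ∈ Icc (0:ℝ) 1, ∀ t ∈ Icc a b, v x t = ∫ s in (0:ℝ)..x, g s t)
    (hlsm : ∀ x1 ∈ Icc (0:ℝ) 1, ∀ x2 ∈ Icc (0:ℝ) 1, x1 < x2 →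
      ∀ t1 ∈ Icc a b, ∀ t2 ∈ Icc a b, t1 < t2 →
        g x1 t2 * g x2 t1 ≤ g x1 t1 * g x2 t2) :
    ∀ x1 x2 : ℝ, 0 < x1 → x1 < x2 → x2 ≤ 1 →
      ∀ t1 ∈ Icc a b, ∀ t2 ∈ Icc a b, t1 ≤ t2 →
        v x2 t1 / v x1 t1 ≤ v x2 t2 / v x1 t2 := by
  intro x1 x2 hx1 h12 hx2 t1 ht1 t2 ht2 ht12
  rcases eq_or_lt_of_le ht12 with rfl | hlt
  · exact le_refl _
  have hx1' : x1 ∈ Icc (0:ℝ) 1 := ⟨hx1.le, (h12.trans_le hx2).le⟩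
  have hx2' : x2 ∈ Icc (0:ℝ) 1 := ⟨(hx1.trans h12).le, hx2⟩
  -- integrability on subintervals
  have hsubB : uIcc (0:ℝ) x1 ⊆ uIcc (0:ℝ) 1 := by
    rw [uIcc_of_le (by norm_num : (0:ℝ) ≤ 1), uIcc_of_le hx1.le]
    exact Icc_subset_Icc le_rfl hx1'.2
  have hsubA : uIcc x1 x2 ⊆ uIcc (0:ℝ) 1 := by
    rw [uIcc_of_le (by norm_num : (0:ℝ) ≤ 1), uIcc_of_le h12.le]
    exact Icc_subset_Icc hx1'.1 hx2'.2
  have hB1 : IntervalIntegrable (fun s => g s t1) volume 0 x1 := (hint t1 ht1).mono_set hsubB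
  have hB2 : IntervalIntegrable (fun s => g s t2) volume 0 x1 := (hint t2 ht2).mono_set hsubB
  have hA1 : IntervalIntegrable (fun s => g s t1) volume x1 x2 := (hint t1 ht1).mono_set hsubA
  have hA2 : IntervalIntegrable (fun s => g s t2) volume x1 x2 := (hint t2 ht2).mono_set hsubA
  set B1 := ∫ s in (0:ℝ)..x1, g s t1 with hB1def
  set B2 := ∫ s in (0:ℝ)..x1, g s t2 with hB2def
  set A1 := ∫ s in x1..x2, g s t1 with hA1def
  set A2 := ∫ s in x1..x2, g s t2 with hA2def
  have memIoo : ∀ s ∈ Ioo (0:ℝ) x1, s ∈ Icc (0:ℝ) 1 :=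
    fun s hs => ⟨hs.1.le, hs.2.le.trans hx1'.2⟩
  have memIoo2 : ∀ s ∈ Ioo x1 x2, s ∈ Icc (0:ℝ) 1 :=
    fun s hs => ⟨hx1.le.trans hs.1.le, hs.2.le.trans hx2⟩
  have hB1pos : 0 < B1 :=
    intervalIntegral.intervalIntegral_pos_of_pos_on hB1
      (fun s hs => hgpos s (memIoo s hs) t1 ht1) hx1
  have hB2pos : 0 < B2 :=
    intervalIntegral.intervalIntegral_pos_of_pos_on hB2
      (fun s hs => hgpos s (memIoo s hs) t2 ht2) hx1
  have hA1pos : 0 < A1 :=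
    intervalIntegral.intervalIntegral_pos_of_pos_on hA1
      (fun s hs => hgpos s (memIoo2 s hs) t1 ht1) h12
  have hA2pos : 0 < A2 :=
    intervalIntegral.intervalIntegral_pos_of_pos_on hA2
      (fun s hs => hgpos s (memIoo2 s hs) t2 ht2) h12
  set c1 := g x1 t1 with hc1def
  set c2 := g x1 t2 with hc2def
  have hc1pos : 0 < c1 := hgpos x1 hx1' t1 ht1
  have hc2pos : 0 < c2 := hgpos x1 hx1' t2 ht2
  -- key inequality 1 : A1 * c2 ≤ A2 * c1
  have key1 : A1 * c2 ≤ A2 * c1 := by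
    have : (∫ s in x1..x2, g s t1 * c2) ≤ ∫ s in x1..x2, g s t2 * c1 := by
      apply intervalIntegral.integral_mono_on h12.le (hA1.mul_const _) (hA2.mul_const _)
      intro s hs
      rcases eq_or_lt_of_le hs.1 with rfl | hlt'
      · simp [hc1def, hc2def, mul_comm]
      · have := hlsm x1 hx1' s ⟨hx1.le.trans hs.1, hs.2.trans hx2⟩ hlt' t1 ht1 t2 ht2 hlt
        nlinarith
    simpa [intervalIntegral.integral_mul_const, hA1def, hA2def] using this
  -- key inequality 2 : B2 * c1 ≤ B1 * c2
  have key2 : B2 * c1 ≤ B1 * c2 := by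
    have : (∫ s in (0:ℝ)..x1, g s t2 * c1) ≤ ∫ s in (0:ℝ)..x1, g s t1 * c2 := by
      apply intervalIntegral.integral_mono_on hx1.le (hB2.mul_const _) (hB1.mul_const _)
      intro s hs
      rcases eq_or_lt_of_le hs.2 with rfl | hlt'
      · simp [hc1def, hc2def, mul_comm]
      · have := hlsm s ⟨hs.1, hs.2.trans hx1'.2⟩ x1 hx1' hlt' t1 ht1 t2 ht2 hlt
        nlinarith
    simpa [intervalIntegral.integral_mul_const, hB1def, hB2def] using this
  -- combine : A1 * B2 ≤ A2 * B1
  have key : A1 * B2 ≤ A2 * B1 := by nlinarith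
  -- rewrite v's
  have hv11 : v x1 t1 = B1 := hv x1 hx1' t1 ht1
  have hv12 : v x1 t2 = B2 := hv x1 hx1' t2 ht2
  have hv21 : v x2 t1 = B1 + A1 := by
    rw [hv x2 hx2' t1 ht1, hB1def, hA1def,
      intervalIntegral.integral_add_adjacent_intervals hB1 hA1]
  have hv22 : v x2 t2 = B2 + A2 := by
    rw [hv x2 hx2' t2 ht2, hB2def, hA2def,
      intervalIntegral.integral_add_adjacent_intervals hB2 hA2]
  rw [hv11, hv12, hv21, hv22, div_le_div_iff₀ hB1pos hB2pos]
  nlinarith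
end

section
/- Let v : [0,1] × [a,b] → ℝ satisfy v(x,t) = ∫₀ˣ g(s,t) ds with g > 0. If g(x₂,t)/g(x₁,t) is nonincreasing in t for all x₁ < x₂ (log-submodularity), then v(x₂,t)/v(x₁,t) is nonincreasing in t for all 0 < x₁ < x₂ ≤ 1. -/
open Set MeasureTheory

/-- If `v(x,t) = ∫₀ˣ g(s,t) ds` with `g > 0` log-submodular in `(x,t)`, then the ratio
`v(x₂,t)/v(x₁,t)` is nonincreasing in `t` for all `0 < x₁ < x₂ ≤ 1`. -/
theorem stmt_5 (a b : ℝ) (hab : a < b) (g v : ℝ → ℝ → ℝ)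
    (hgpos : ∀ s ∈ Icc (0:ℝ) 1, ∀ t ∈ Icc a b, 0 < g s t)
    (hint : ∀ t ∈ Icc a b, IntervalIntegrable (fun s => g s t) volume 0 1)
    (hv : ∀ x ∈ Icc (0:ℝ) 1, ∀ t ∈ Icc a b, v x t = ∫ s in (0:ℝ)..x, g s t)
    (hlsm : ∀ x1 ∈ Icc (0:ℝ) 1, ∀ x2 ∈ Icc (0:ℝ) 1, x1 < x2 →
      ∀ t1 ∈ Icc a b, ∀ t2 ∈ Icc a b, t1 < t2 →
        g x1 t1 * g x2 t2 ≤ g x1 t2 * g x2 t1) :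
    ∀ x1 x2 : ℝ, 0 < x1 → x1 < x2 → x2 ≤ 1 →
      ∀ t1 ∈ Icc a b, ∀ t2 ∈ Icc a b, t1 ≤ t2 →
        v x2 t2 / v x1 t2 ≤ v x2 t1 / v x1 t1 := by
  intro x1 x2 hx1 hx12 hx2 t1 ht1 t2 ht2 ht12
  rcases eq_or_lt_of_le ht12 with rfl | htlt
  · exact le_refl _
  have hx1mem : x1 ∈ Icc (0:ℝ) 1 := ⟨hx1.le, hx12.le.trans hx2⟩
  have hx2mem : x2 ∈ Icc (0:ℝ) 1 := ⟨(hx1.trans hx12).le, hx2⟩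
  -- integrability on subintervals
  have hsub1 : ∀ t ∈ Icc a b, IntervalIntegrable (fun s => g s t) volume 0 x1 := by
    intro t ht
    exact (hint t ht).mono_set (uIcc_subset_uIcc_iff_mem.mpr
      ⟨left_mem_uIcc, by rwa [uIcc_of_le zero_le_one]⟩)
  have hsub2 : ∀ t ∈ Icc a b, IntervalIntegrable (fun s => g s t) volume x1 x2 := by
    intro t ht
    exact (hint t ht).mono_set (uIcc_subset_uIcc_iff_mem.mpr
      ⟨by rwa [uIcc_of_le zero_le_one], by rwa [uIcc_of_le zero_le_one]⟩)
  set V1 : ℝ → ℝ := fun t => ∫ s in (0:ℝ)..x1, g s t with hV1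
  set W : ℝ → ℝ := fun t => ∫ s in x1..x2, g s t with hW
  have hV1pos : ∀ t ∈ Icc a b, 0 < V1 t := by
    intro t ht
    apply intervalIntegral.intervalIntegral_pos_of_pos_on (hsub1 t ht)
    · intro s hs
      exact hgpos s ⟨hs.1.le, hs.2.le.trans hx1mem.2⟩ t ht
    · exact hx1
  have hWpos : ∀ t ∈ Icc a b, 0 < W t := by
    intro t ht
    apply intervalIntegral.intervalIntegral_pos_of_pos_on (hsub2 t ht)
    · intro s hs
      exact hgpos s ⟨hx1.le.trans hs.1.le, hs.2.le.trans hx2⟩ t ht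
    · exact hx12
  have hvsplit : ∀ t ∈ Icc a b, v x2 t = V1 t + W t := by
    intro t ht
    rw [hv x2 hx2mem t ht]
    exact (intervalIntegral.integral_add_adjacent_intervals (hsub1 t ht) (hsub2 t ht)).symm
  -- key inequality: W t2 * V1 t1 ≤ W t1 * V1 t2
  have key : W t2 * V1 t1 ≤ W t1 * V1 t2 := by
    have inner : ∀ u ∈ Icc x1 x2, g u t2 * V1 t1 ≤ g u t1 * V1 t2 := by
      intro u hu
      have humem : u ∈ Icc (0:ℝ) 1 := ⟨hx1.le.trans hu.1, hu.2.trans hx2⟩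
      rw [hV1, ← intervalIntegral.integral_const_mul, ← intervalIntegral.integral_const_mul]
      apply intervalIntegral.integral_mono_on hx1.le
        ((hsub1 t1 ht1).const_mul _) ((hsub1 t2 ht2).const_mul _)
      intro s hs
      have hsmem : s ∈ Icc (0:ℝ) 1 := ⟨hs.1, hs.2.trans hx1mem.2⟩
      rcases lt_or_eq_of_le (hs.2.trans hu.1) with hsu | hsu
      · have := hlsm s hsmem u humem hsu t1 ht1 t2 ht2 htlt
        linarith [this]
      · subst hsu; ring_nf; exact le_of_eq (by ring)
    calc W t2 * V1 t1 = ∫ u in x1..x2, g u t2 * V1 t1 := by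
          rw [hW]; rw [intervalIntegral.integral_mul_const]
      _ ≤ ∫ u in x1..x2, g u t1 * V1 t2 := by
          apply intervalIntegral.integral_mono_on hx12.le
            ((hsub2 t2 ht2).mul_const _) ((hsub2 t1 ht1).mul_const _) inner
      _ = W t1 * V1 t2 := by rw [hW]; rw [intervalIntegral.integral_mul_const]
  have hv1t1 : v x1 t1 = V1 t1 := hv x1 hx1mem t1 ht1
  have hv1t2 : v x1 t2 = V1 t2 := hv x1 hx1mem t2 ht2
  rw [hv1t1, hv1t2, hvsplit t1 ht1, hvsplit t2 ht2,
    div_le_div_iff₀ (hV1pos t2 ht2) (hV1pos t1 ht1)]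
  nlinarith [hV1pos t1 ht1, hV1pos t2 ht2]
end

section
/- Consider the linear program over u ∈ ℝⁿ: maximize ∑ᵢ μᵢ(λᵢ − 1)uᵢ subject to uᵢ ≥ uⱼ + Δⱼᵢ for all i > j (with Δⱼᵢ ≥ 0 given constants) and uᵢ ≥ 0 for all i, where μᵢ > 0, ∑ᵢ μᵢ λᵢ ≤ ∑ᵢ μᵢ, and λ is nonincreasing with λᵢ ≥ 0. Then the objective is bounded above on the feasible set, and hence the LP attains a maximum. -/
open Finset

lemma abel_nonpos (n : ℕ) (c g : ℕ → ℝ)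
    (hT : ∀ k, ∑ i ∈ Finset.Ico k n, c i ≤ 0)
    (hg0 : ∀ i, 0 ≤ g i) (hgm : Monotone g) :
    ∑ i ∈ Finset.range n, c i * g i ≤ 0 := by
  induction n generalizing c g with
  | zero => simp
  | succ n ih =>
    have h1 : ∑ i ∈ Finset.range (n+1), c i * g i
        = g 0 * (∑ i ∈ Finset.range (n+1), c i)
          + ∑ i ∈ Finset.range (n+1), c i * (g i - g 0) := by
      rw [Finset.mul_sum, ← Finset.sum_add_distrib]
      exact Finset.sum_congr rfl fun i _ => by ring
    have h2 : ∑ i ∈ Finset.range (n+1), c i * (g i - g 0)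
        = ∑ i ∈ Finset.range n, c (i+1) * (g (i+1) - g 0) := by
      rw [Finset.sum_range_succ']
      simp
    have hTa : ∑ i ∈ Finset.range (n+1), c i ≤ 0 := by
      have := hT 0
      rwa [← Finset.range_eq_Ico] at this
    have hfirst : g 0 * (∑ i ∈ Finset.range (n+1), c i) ≤ 0 :=
      mul_nonpos_of_nonneg_of_nonpos (hg0 0) hTa
    have hsecond : ∑ i ∈ Finset.range n, c (i+1) * (g (i+1) - g 0) ≤ 0 := by
      apply ih (fun i => c (i+1)) (fun i => g (i+1) - g 0)
      · intro k
        have hre : ∑ i ∈ Finset.Ico k n, c (i+1) = ∑ i ∈ Finset.Ico (k+1) (n+1), c i := by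
          rw [Finset.sum_Ico_eq_sum_range, Finset.sum_Ico_eq_sum_range]
          have : n + 1 - (k + 1) = n - k := by omega
          rw [this]
          exact Finset.sum_congr rfl fun i _ => by congr 1; omega
        rw [hre]; exact hT (k+1)
      · intro i; simpa using hgm (Nat.zero_le (i+1))
      · intro a b hab
        have := hgm (Nat.succ_le_succ hab)
        simpa using this
    rw [h1, h2]
    linarith



/-- Feasibility for the downward-IC linear program: `u` satisfies the (global) downward
incentive constraints with increments `Δ` and is individually rational. -/
def FeasibleLP (n : ℕ) (Δ : Fin n → Fin n → ℝ) (u : Fin n → ℝ) : Prop :=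
  (∀ i j : Fin n, j < i → u j + Δ j i ≤ u i) ∧ ∀ i : Fin n, 0 ≤ u i

/-- The downward-IC linear program `max ∑ μᵢ (λᵢ − 1) uᵢ` over the feasible polyhedron is
bounded above, and hence attains its maximum. -/
theorem stmt_8 (n : ℕ) (μ lam : Fin n → ℝ) (Δ : Fin n → Fin n → ℝ)
    (hμ : ∀ i, 0 < μ i) (hlam0 : ∀ i, 0 ≤ lam i) (hlam : Antitone lam)
    (hnorm : ∑ i, μ i * lam i ≤ ∑ i, μ i)
    (hΔ : ∀ i j : Fin n, j < i → 0 ≤ Δ j i) :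
    (∃ M : ℝ, ∀ u : Fin n → ℝ, FeasibleLP n Δ u →
        ∑ i, μ i * (lam i - 1) * u i ≤ M) ∧
    (∃ u' : Fin n → ℝ, FeasibleLP n Δ u' ∧
        ∀ u : Fin n → ℝ, FeasibleLP n Δ u →
          ∑ i, μ i * (lam i - 1) * u i ≤ ∑ i, μ i * (lam i - 1) * u' i) := by
  rcases Nat.eq_zero_or_pos n with hn | hn
  · subst hn
    refine ⟨⟨0, fun u _ => by simp⟩,
      Fin.elim0, ⟨fun i => i.elim0, fun i => i.elim0⟩, fun u _ => by simp⟩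
  -- notation
  set f : (Fin n → ℝ) → ℝ := fun u => ∑ i, μ i * (lam i - 1) * u i with hf
  -- bound on Δ
  set D : ℝ := 1 + ∑ p : Fin n × Fin n, |Δ p.1 p.2| with hD
  have hDsum : (0:ℝ) ≤ ∑ p : Fin n × Fin n, |Δ p.1 p.2| :=
    Finset.sum_nonneg fun p _ => abs_nonneg _
  have hD1 : (1:ℝ) ≤ D := by simp [hD]; linarith
  have hD0 : (0:ℝ) < D := by linarith
  have hDΔ : ∀ j i : Fin n, Δ j i ≤ D := by
    intro j i
    have h1 : |Δ j i| ≤ ∑ p : Fin n × Fin n, |Δ p.1 p.2| :=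
      Finset.single_le_sum (f := fun p : Fin n × Fin n => |Δ p.1 p.2|)
        (fun p _ => abs_nonneg _) (Finset.mem_univ (j, i))
    have := le_abs_self (Δ j i)
    linarith
  -- objective coefficients, extended to ℕ
  set c : ℕ → ℝ := fun i => if h : i < n then μ ⟨i, h⟩ * (lam ⟨i, h⟩ - 1) else 0 with hc
  have hconv : ∀ (u : Fin n → ℝ) (w : ℕ → ℝ), (∀ i : Fin n, w i = u i) →
      f u = ∑ i ∈ Finset.range n, c i * w i := by
    intro u w hw
    rw [hf, ← Fin.sum_univ_eq_sum_range (fun i => c i * w i) n]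
    refine Finset.sum_congr rfl fun i _ => ?_
    simp only [hc, i.isLt, dif_pos, Fin.eta, hw i]
  -- tail sums are nonpositive
  have hT : ∀ k, ∑ i ∈ Finset.Ico k n, c i ≤ 0 := by
    intro k
    rcases le_or_gt n k with hk | hk
    · rw [Finset.Ico_eq_empty (by omega)]; simp
    have htot : ∑ i ∈ Finset.Ico 0 n, c i ≤ 0 := by
      rw [← Finset.range_eq_Ico, ← Fin.sum_univ_eq_sum_range c n]
      have : ∑ i : Fin n, c i = ∑ i : Fin n, μ i * (lam i - 1) :=
        Finset.sum_congr rfl fun i _ => by simp [hc, i.isLt, Fin.eta]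
      rw [this]
      have : ∑ i : Fin n, μ i * (lam i - 1) = ∑ i, μ i * lam i - ∑ i, μ i := by
        rw [← Finset.sum_sub_distrib]; exact Finset.sum_congr rfl fun i _ => by ring
      rw [this]; linarith
    rcases le_or_gt (lam ⟨k, hk⟩) 1 with hl | hl
    · apply Finset.sum_nonpos
      intro i hi
      rw [Finset.mem_Ico] at hi
      have h2 : i < n := hi.2
      have hle : lam ⟨i, h2⟩ ≤ lam ⟨k, hk⟩ := hlam (by exact hi.1)
      have := (hμ ⟨i, h2⟩).le
      simp only [hc, h2, dif_pos]
      nlinarith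
    · have hsplit : ∑ i ∈ Finset.Ico 0 k, c i + ∑ i ∈ Finset.Ico k n, c i
          = ∑ i ∈ Finset.Ico 0 n, c i :=
        Finset.sum_Ico_consecutive _ (Nat.zero_le k) hk.le
      have hhead : 0 ≤ ∑ i ∈ Finset.Ico 0 k, c i := by
        apply Finset.sum_nonneg
        intro i hi
        rw [Finset.mem_Ico] at hi
        have h2 : i < n := lt_trans hi.2 hk
        have hge : lam ⟨k, hk⟩ ≤ lam ⟨i, h2⟩ := hlam (by exact hi.2.le)
        have := (hμ ⟨i, h2⟩).le
        simp only [hc, h2, dif_pos]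
        nlinarith
      linarith
  -- feasible points are monotone and nonnegative
  have hmono : ∀ u : Fin n → ℝ, FeasibleLP n Δ u → ∀ i j : Fin n, j ≤ i → u j ≤ u i := by
    intro u hu i j hji
    rcases eq_or_lt_of_le hji with h | h
    · rw [h]
    · have h1 := hu.1 i j h
      have h2 := hΔ i j h
      linarith
  -- key truncation step
  have key : ∀ u : Fin n → ℝ, FeasibleLP n Δ u →
      ∃ v : Fin n → ℝ, FeasibleLP n Δ v ∧ (∀ i, v i ≤ n * D) ∧ f u ≤ f v := by
    intro u hu
    have hmin : ∀ k : ℕ, min k (n - 1) < n := fun k => by omega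
    set U : ℕ → ℝ := fun k => u ⟨min k (n - 1), hmin k⟩ with hU
    have hUmono : Monotone U := by
      intro a b hab
      exact hmono u hu _ _ (by simp [Fin.le_def]; omega)
    have hU0 : ∀ k, 0 ≤ U k := fun k => hu.2 _
    have hUi : ∀ i : Fin n, U i = u i := by
      intro i
      have h : (⟨min i.val (n - 1), hmin i.val⟩ : Fin n) = i := by
        ext; simp; omega
      exact congrArg u h
    set d : ℕ → ℝ := fun k => match k with
      | 0 => U 0
      | Nat.succ k => U (k + 1) - U k with hd
    have htel : ∀ m, ∑ k ∈ Finset.range (m + 1), d k = U m := by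
      intro m
      induction m with
      | zero => simp [hd]
      | succ m ih =>
        rw [Finset.sum_range_succ, ih]
        show U m + (U (m + 1) - U m) = U (m + 1); ring
    have hd0 : ∀ k, 0 ≤ d k := by
      intro k
      match k with
      | 0 => exact hU0 0
      | Nat.succ k =>
        show (0:ℝ) ≤ U (k + 1) - U k
        have := hUmono (Nat.le_succ k); linarith
    set e : ℕ → ℝ := fun k => min (d k) D with he
    have he0 : ∀ k, 0 ≤ e k := fun k => le_min (hd0 k) hD0.le
    have heD : ∀ k, e k ≤ D := fun k => min_le_right _ _
    have hed : ∀ k, e k ≤ d k := fun k => min_le_left _ _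
    set V : ℕ → ℝ := fun k => ∑ j ∈ Finset.range (k + 1), e j with hV
    have hVmono : Monotone V := by
      intro a b hab
      exact Finset.sum_le_sum_of_subset_of_nonneg
        (Finset.range_subset_range.2 (by omega)) (fun j _ _ => he0 j)
    have hV0 : ∀ k, 0 ≤ V k := fun k => Finset.sum_nonneg fun j _ => he0 j
    set v : Fin n → ℝ := fun i => V i with hv
    have hVdiff : ∀ j i : Fin n, j < i →
        V i - V j = ∑ k ∈ Finset.Ico (j.val + 1) (i.val + 1), e k := by
      intro j i hji
      have hle : j.val + 1 ≤ i.val + 1 := Nat.succ_le_succ (Fin.lt_def.mp hji).le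
      show (∑ k ∈ Finset.range (i.val + 1), e k) - (∑ k ∈ Finset.range (j.val + 1), e k)
          = ∑ k ∈ Finset.Ico (j.val + 1) (i.val + 1), e k
      rw [Finset.sum_Ico_eq_sub _ hle]
    have hvfeas : FeasibleLP n Δ v := by
      constructor
      · intro i j hji
        have hs := hVdiff j i hji
        have hji' : j.val < i.val := hji
        rcases Classical.em (∃ k ∈ Finset.Ico (j.val + 1) (i.val + 1), D ≤ d k) with ⟨k0, hk0, hk0D⟩ | hno
        · have hek0 : e k0 = D := min_eq_right hk0D
          have : D ≤ ∑ k ∈ Finset.Ico (j.val + 1) (i.val + 1), e k := by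
            rw [← hek0]
            exact Finset.single_le_sum (fun k _ => he0 k) hk0
          have := hDΔ j i
          simp only [hv]
          linarith [hs, hDΔ j i, this]
        · push_neg at hno
          have hsum : ∑ k ∈ Finset.Ico (j.val + 1) (i.val + 1), e k
              = ∑ k ∈ Finset.Ico (j.val + 1) (i.val + 1), d k :=
            Finset.sum_congr rfl fun k hk => min_eq_left (hno k hk).le
          have hdsum : ∑ k ∈ Finset.Ico (j.val + 1) (i.val + 1), d k = U i - U j := by
            rw [Finset.sum_Ico_eq_sub _ (by omega), htel, htel]
          have hcons := hu.1 i j hji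
          rw [hUi, hUi] at hdsum
          simp only [hv]
          linarith [hs, hsum, hdsum]
      · intro i; exact hV0 _
    refine ⟨v, hvfeas, ?_, ?_⟩
    · intro i
      have h1 : V i ≤ (i.val + 1) * D := by
        calc V i.val ≤ ∑ j ∈ Finset.range (i.val + 1), D :=
              Finset.sum_le_sum fun j _ => heD j
          _ = (i.val + 1) * D := by rw [Finset.sum_const, Finset.card_range]; simp [nsmul_eq_mul]
      have h2 : ((i.val : ℝ) + 1) ≤ n := by
        have := i.isLt; exact_mod_cast Nat.succ_le_of_lt this
      calc v i ≤ (i.val + 1) * D := h1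
        _ ≤ n * D := by nlinarith
    · -- f u ≤ f v
      have h1 : f u = ∑ i ∈ Finset.range n, c i * U i := hconv u U hUi
      have h2 : f v = ∑ i ∈ Finset.range n, c i * V i := hconv v V fun i => rfl
      set g : ℕ → ℝ := fun k => U k - V k with hg
      have hgsum : ∀ k, g k = ∑ j ∈ Finset.range (k + 1), (d j - e j) := by
        intro k
        rw [hg]
        simp only
        rw [Finset.sum_sub_distrib, htel]
      have hg0 : ∀ k, 0 ≤ g k := by
        intro k
        rw [hgsum]
        exact Finset.sum_nonneg fun j _ => by linarith [hed j]
      have hgm : Monotone g := by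
        intro a b hab
        rw [hgsum, hgsum]
        exact Finset.sum_le_sum_of_subset_of_nonneg
          (Finset.range_subset_range.2 (by omega)) (fun j _ _ => by linarith [hed j])
      have habel := abel_nonpos n c g hT hg0 hgm
      have hsplit : ∑ i ∈ Finset.range n, c i * g i
          = ∑ i ∈ Finset.range n, c i * U i - ∑ i ∈ Finset.range n, c i * V i := by
        rw [← Finset.sum_sub_distrib]
        exact Finset.sum_congr rfl fun i _ => by
          show c i * (U i - V i) = c i * U i - c i * V i; ring
      rw [h1, h2]
      linarith [habel, hsplit.symm.le]
  -- compactness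
  have hFclosed : IsClosed {u : Fin n → ℝ | FeasibleLP n Δ u} := by
    have : {u : Fin n → ℝ | FeasibleLP n Δ u} =
        (⋂ i, ⋂ j, ⋂ (_ : j < i), {u : Fin n → ℝ | u j + Δ j i ≤ u i}) ∩
        ⋂ i, {u : Fin n → ℝ | 0 ≤ u i} := by
      ext u
      simp only [Set.mem_inter_iff, Set.mem_iInter, Set.mem_setOf_eq, FeasibleLP]
    rw [this]
    apply IsClosed.inter
    · exact isClosed_iInter fun i => isClosed_iInter fun j => isClosed_iInter fun _ =>
        isClosed_le (by continuity) (continuous_apply i)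
    · exact isClosed_iInter fun i => isClosed_le continuous_const (continuous_apply i)
  set K : Set (Fin n → ℝ) :=
    {u | FeasibleLP n Δ u} ∩ Set.Icc 0 (fun _ => n * D) with hK
  have hKcomp : IsCompact K := IsCompact.inter_left isCompact_Icc hFclosed
  have hKne : K.Nonempty := by
    refine ⟨fun i : Fin n => ((i : ℕ) + 1 : ℝ) * D, ⟨?_, ?_⟩, ?_, ?_⟩
    · intro i j hji
      have hji' : (j : ℕ) < (i : ℕ) := hji
      have h1 : ((j : ℕ) + 1 : ℝ) + 1 ≤ (i : ℕ) + 1 := by exact_mod_cast by omega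
      have h2 := hDΔ j i
      have h3 : (0:ℝ) ≤ (((i : ℕ) : ℝ) - ((j : ℕ) : ℝ) - 1) * D :=
        mul_nonneg (by linarith) hD0.le
      show ((j : ℕ) + 1 : ℝ) * D + Δ j i ≤ ((i : ℕ) + 1 : ℝ) * D
      nlinarith
    · intro i
      positivity
    · intro i
      positivity
    · intro i
      simp only
      have : ((i : ℕ) + 1 : ℝ) ≤ n := by exact_mod_cast i.isLt
      nlinarith
  have hfc : Continuous f := by
    apply continuous_finset_sum
    intro i _
    exact continuous_const.mul (continuous_apply i)
  obtain ⟨u', hu'K, hmax⟩ := hKcomp.exists_isMaxOn hKne hfc.continuousOn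
  have hglobal : ∀ u : Fin n → ℝ, FeasibleLP n Δ u → f u ≤ f u' := by
    intro u hu
    obtain ⟨v, hvfeas, hvbd, hle⟩ := key u hu
    have hvK : v ∈ K := ⟨hvfeas, fun i => hvfeas.2 i, fun i => hvbd i⟩
    exact le_trans hle (hmax hvK)
  exact ⟨⟨f u', hglobal⟩, u', hu'K.1, hglobal⟩
end

section
/- Let {z₁ < ⋯ < z_m} ⊂ ℝ and let Q be a probability measure supported on {z₁,…,z_m} with mean z̄ ∈ [zᵢ, z_{i+1}]. Let P be the unique two-point distribution on {zᵢ, z_{i+1}} with mean z̄. Then for every convex g : ℝ → ℝ, ∫ g dP ≤ ∫ g dQ. -/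
open Set MeasureTheory

/-- The two-point distribution on `{zᵢ, z_{i+1}}` with the same mean `z̄` as a distribution
`Q` supported on the grid `z₀ < ⋯ < z_{m-1}` is minimal in the convex order: for every
convex `g`, `(1-α) g(zᵢ) + α g(z_{i+1}) ≤ ∫ g dQ`, where `α = (z̄ − zᵢ)/(z_{i+1} − zᵢ)`. -/
theorem stmt_15 (m : ℕ) (z : ℕ → ℝ)
    (hz : ∀ k, k + 1 < m → z k < z (k + 1))
    (i : ℕ) (hi : i + 1 < m)
    (Q : Measure ℝ) [IsProbabilityMeasure Q]
    (hQsupp : Q (z '' {k | k < m}) = 1)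
    (zbar : ℝ) (hzbar : zbar = ∫ x, x ∂Q)
    (hmean_loc : zbar ∈ Icc (z i) (z (i + 1)))
    (g : ℝ → ℝ) (hg : ConvexOn ℝ univ g)
    (hgQ : Integrable g Q) :
    (1 - (zbar - z i) / (z (i + 1) - z i)) * g (z i) +
      (zbar - z i) / (z (i + 1) - z i) * g (z (i + 1)) ≤ ∫ x, g x ∂Q := by
  have hmono : ∀ j k, j < k → k < m → z j < z k := by
    intro j k hjk hkm
    induction k, hjk using Nat.le_induction with
    | base => exact hz j hkm
    | succ k hk ih => exact (ih (by omega)).trans (hz k hkm)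
  have hd : (0:ℝ) < z (i+1) - z i := sub_pos.2 (hz i hi)
  set s := (g (z (i+1)) - g (z i)) / (z (i+1) - z i) with hs
  have hcan : s * (z (i+1) - z i) = g (z (i+1)) - g (z i) := by
    rw [hs, div_mul_cancel₀ _ (ne_of_gt hd)]
  set L : ℝ → ℝ := fun x => g (z i) + s * (x - z i) with hL
  have hLg : ∀ k, k < m → L (z k) ≤ g (z k) := by
    intro k hk
    simp only [hL]
    rcases lt_trichotomy k i with h | h | h
    · have hlt : z k < z i := hmono k i h (by omega)
      have hsl := hg.slope_mono_adjacent (mem_univ (z k)) (mem_univ (z (i+1))) hlt (hz i hi)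
      rw [div_le_div_iff₀ (sub_pos.2 hlt) hd] at hsl
      nlinarith [hcan]
    · subst h; simp
    · rcases eq_or_lt_of_le (Nat.succ_le_of_lt h) with h1 | h1
      · rw [← h1]; nlinarith [hcan]
      · have hlt : z (i+1) < z k := hmono (i+1) k h1 hk
        have hsl := hg.slope_mono_adjacent (mem_univ (z i)) (mem_univ (z k)) (hz i hi) hlt
        rw [div_le_div_iff₀ hd (sub_pos.2 hlt)] at hsl
        nlinarith [hcan]
  have hsupp : ∀ᵐ x ∂Q, x ∈ z '' {k | k < m} := by
    have hfin : (z '' {k | k < m}).Finite := (Set.finite_Iio m).image z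
    have hcompl := measure_compl hfin.measurableSet (measure_ne_top Q _)
    rw [hQsupp, measure_univ, tsub_self] at hcompl
    rw [ae_iff]
    exact hcompl
  have hxint : Integrable (fun x : ℝ => x) Q := by
    refine (integrable_const (∑ k ∈ Finset.range m, |z k|)).mono' aestronglyMeasurable_id ?_
    filter_upwards [hsupp] with x hx
    obtain ⟨k, hk, rfl⟩ := hx
    simpa using Finset.single_le_sum (fun j _ => abs_nonneg (z j)) (Finset.mem_range.2 hk)
  have hLint : Integrable L Q := by
    have hLeq : L = fun x => (g (z i) - s * z i) + s * x := by
      funext x; simp only [hL]; ring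
    rw [hLeq]
    exact (integrable_const _).add (hxint.const_mul s)
  have hle : ∫ x, L x ∂Q ≤ ∫ x, g x ∂Q := by
    refine integral_mono_ae hLint hgQ ?_
    filter_upwards [hsupp] with x hx
    obtain ⟨k, hk, rfl⟩ := hx
    exact hLg k hk
  have hLval : ∫ x, L x ∂Q = g (z i) + s * (zbar - z i) := by
    have hLeq : L = fun x => (g (z i) - s * z i) + s * x := by
      funext x; simp only [hL]; ring
    rw [hLeq, integral_add (integrable_const _) (hxint.const_mul s), MeasureTheory.integral_const_mul,
      integral_const, probReal_univ, ← hzbar]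
    simp
    ring
  have : (1 - (zbar - z i) / (z (i + 1) - z i)) * g (z i) +
      (zbar - z i) / (z (i + 1) - z i) * g (z (i + 1)) = g (z i) + s * (zbar - z i) := by
    rw [hs]; field_simp; ring
  rw [this, ← hLval]
  exact hle
end

section
/- Let v : X × [a,b] → ℝ where (X, ≼) is a partially ordered set, and suppose v(·, t) has strict increasing differences: for x ≺ x' and t < t', v(x',t') − v(x,t') > v(x',t) − v(x,t). Let a, a' be probability measures on X with a ≼_st a' (stochastic dominance: ∫h da ≤ ∫h da' for all monotone bounded measurable h) and a ≠ a'. Suppose there exists a coupling (Y, Y') of (a, a') with Y ≼ Y' almost surely and P(Y ≺ Y') > 0. Then for all t < t', ∫ (v(x,t') − v(x,t)) da(x) < ∫ (v(x,t') − v(x,t)) da'(x). -/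
open Set MeasureTheory

/-- Under strict increasing differences, a strictly stochastically larger lottery
(witnessed by a monotone coupling that is strictly larger with positive probability)
yields a strictly larger expected incremental value. -/
theorem stmt_18 {X : Type*} [MeasurableSpace X] [PartialOrder X]
    (ta tb : ℝ) (v : X → ℝ → ℝ)
    (hmeas : ∀ t, Measurable fun x => v x t)
    (hbdd : ∃ C : ℝ, ∀ x t, |v x t| ≤ C)
    (hID : ∀ x x' : X, x < x' → ∀ t t' : ℝ, t ∈ Icc ta tb → t' ∈ Icc ta tb → t < t' →
      v x' t - v x t < v x' t' - v x t')
    (ν ν' : Measure X) [IsProbabilityMeasure ν] [IsProbabilityMeasure ν']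
    (hne : ν ≠ ν')
    (hst : ∀ h : X → ℝ, Monotone h → Measurable h → (∃ C : ℝ, ∀ x, |h x| ≤ C) →
      ∫ x, h x ∂ν ≤ ∫ x, h x ∂ν')
    {Ω : Type*} [MeasurableSpace Ω] (P : Measure Ω) [IsProbabilityMeasure P]
    (Y Y' : Ω → X) (hY : Measurable Y) (hY' : Measurable Y')
    (hmapY : Measure.map Y P = ν) (hmapY' : Measure.map Y' P = ν')
    (hle : ∀ᵐ ω ∂P, Y ω ≤ Y' ω)
    (hlt : 0 < P {ω | Y ω < Y' ω}) :
    ∀ t ∈ Icc ta tb, ∀ t' ∈ Icc ta tb, t < t' →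
      ∫ x, (v x t' - v x t) ∂ν < ∫ x, (v x t' - v x t) ∂ν' := by
  intro t ht t' ht' htt'
  obtain ⟨C, hC⟩ := hbdd
  set g : X → ℝ := fun x => v x t' - v x t with hg
  have hgmeas : Measurable g := (hmeas t').sub (hmeas t)
  have hgstrict : ∀ x x' : X, x < x' → g x < g x' := by
    intro x x' hx
    have := hID x x' hx t t' ht ht' htt'
    simp only [hg]; linarith
  have hgbd : ∀ x, |g x| ≤ 2 * C := by
    intro x
    have h1 := hC x t'
    have h2 := hC x t
    simp only [hg]
    calc |v x t' - v x t| ≤ |v x t'| + |v x t| := abs_sub _ _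
      _ ≤ 2 * C := by linarith
  -- transfer integrals to Ω
  have hI1 : ∫ x, (v x t' - v x t) ∂ν = ∫ ω, g (Y ω) ∂P := by
    rw [← hmapY, integral_map hY.aemeasurable hgmeas.aestronglyMeasurable]
  have hI2 : ∫ x, (v x t' - v x t) ∂ν' = ∫ ω, g (Y' ω) ∂P := by
    rw [← hmapY', integral_map hY'.aemeasurable hgmeas.aestronglyMeasurable]
  -- integrability
  have hint : ∀ (Z : Ω → X), Measurable Z → Integrable (fun ω => g (Z ω)) P := by
    intro Z hZ
    refine Integrable.mono' (integrable_const (2 * C)) (hgmeas.comp hZ).aestronglyMeasurable ?_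
    exact Filter.Eventually.of_forall fun ω => hgbd (Z ω)
  set f : Ω → ℝ := fun ω => g (Y' ω) - g (Y ω) with hf
  have hfint : Integrable f P := (hint Y' hY').sub (hint Y hY)
  have hfnn : 0 ≤ᵐ[P] f := by
    filter_upwards [hle] with ω hω
    rcases lt_or_eq_of_le hω with h | h
    · exact le_of_lt (sub_pos.mpr (hgstrict _ _ h))
    · simp [hf, h]
  have hfpos : 0 < ∫ ω, f ω ∂P := by
    rcases lt_or_eq_of_le (integral_nonneg_of_ae hfnn) with h | h
    · exact h
    · exfalso
      have hzero : f =ᵐ[P] 0 :=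
        (integral_eq_zero_iff_of_nonneg_ae hfnn hfint).mp h.symm
      have hsub : {ω | Y ω < Y' ω} ⊆ {ω | f ω ≠ 0} := by
        intro ω hω
        exact ne_of_gt (sub_pos.mpr (hgstrict _ _ hω))
      have : P {ω | Y ω < Y' ω} = 0 :=
        measure_mono_null hsub hzero
      exact absurd this (ne_of_gt hlt)
  rw [hI1, hI2, ← sub_pos]
  rwa [← integral_sub (hint Y' hY') (hint Y hY)]
end
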